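/- (Proposition 3) For every natural number k ≥ 0, the global Lyapunov exponent of the infinitely piecewise linear map φ_k equals 2; that is, ∫₀¹ ρ⁽ᵏ⁾(x) · log₂(D_k(x)) dx = 2, where D_k(x) denotes the slope of φ_k at x and ρ⁽ᵏ⁾ is the invariant density of φ_k. -/

import Mathlib

open MeasureTheory

/-- The slope `D_k` of the infinitely piecewise linear map `φ_k`:
`D_k(x) = 2^(1-k)` for `x ∈ [1/2, 1]` and `D_k(x) = 2^i` for `x ∈ [2^(-i), 2^(1-i))`, `i ≥ 2`.
For `0 < x < 1/2`, the index `i` is recovered as `i = -(Int.log 2 x)`. -/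
noncomputable def Dslope (k : ℕ) (x : ℝ) : ℝ :=
  if (1 : ℝ) / 2 ≤ x then (2 : ℝ) ^ ((1 : ℤ) - k)
  else (2 : ℝ) ^ (-(Int.log 2 x))

/-- The invariant density `ρᵏ` of `φ_k`: constant `1` when `k = 0`;
`4/3` on `[0,1/2)` and `2/3` on `[1/2,1]` when `k = 1`;
`(2^k + 2)/3` on `[0, 2^(-k))` and `2/3` on `[2^(-k), 1]` when `k ≥ 2`. -/
noncomputable def rho (k : ℕ) (x : ℝ) : ℝ :=
  if k = 0 then 1
  else if k = 1 then (if x < 1 / 2 then 4 / 3 else 2 / 3)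
  else (if x < (2 : ℝ) ^ (-(k : ℤ)) then ((2 : ℝ) ^ k + 2) / 3 else 2 / 3)

namespace Stmt3
noncomputable def piece (n : ℕ) : Set ℝ :=
  Set.Ico ((2:ℝ) ^ (-(n:ℤ)-1)) ((2:ℝ) ^ (-(n:ℤ)))
noncomputable def cval (k n : ℕ) : ℝ :=
  rho k ((2:ℝ) ^ (-(n:ℤ)-1)) * (if n = 0 then 1 - (k:ℝ) else (n:ℝ)+1)
lemma logb_two_zpow (z : ℤ) : Real.logb 2 ((2:ℝ) ^ z) = z := by
  rw [Real.logb, Real.log_zpow, mul_div_assoc,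
    div_self (Real.log_ne_zero_of_pos_of_ne_one two_pos (by norm_num)), mul_one]

lemma union_piece : (⋃ n, piece n) = Set.Ioo (0:ℝ) 1 := by
  ext x
  simp only [Set.mem_iUnion, piece, Set.mem_Ico, Set.mem_Ioo]
  constructor
  · rintro ⟨n, h1, h2⟩
    refine ⟨lt_of_lt_of_le (zpow_pos two_pos _) h1, lt_of_lt_of_le h2 ?_⟩
    calc (2:ℝ) ^ (-(n:ℤ)) ≤ (2:ℝ) ^ (0:ℤ) := by
          apply zpow_le_zpow_right₀ one_le_two; omega
      _ = 1 := zpow_zero 2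
  · rintro ⟨h0, h1⟩
    have hm : Int.log 2 x < 0 := by
      have := (Int.lt_zpow_iff_log_lt (b := 2) one_lt_two (r := x) h0 (x := 0)).mp
        (by simpa using h1)
      simpa using this
    refine ⟨(-Int.log 2 x - 1).toNat, ?_, ?_⟩
    · have hn : (((-Int.log 2 x - 1).toNat : ℤ)) = -Int.log 2 x - 1 := Int.toNat_of_nonneg (by omega)
      rw [show (-(((-Int.log 2 x - 1).toNat : ℤ)) - 1) = Int.log 2 x by omega]
      exact Int.zpow_log_le_self one_lt_two h0
    · have hn : (((-Int.log 2 x - 1).toNat : ℤ)) = -Int.log 2 x - 1 := Int.toNat_of_nonneg (by omega)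
      rw [show (-(((-Int.log 2 x - 1).toNat : ℤ))) = Int.log 2 x + 1 by omega]
      exact Int.lt_zpow_succ_log_self one_lt_two x

lemma piece_disjoint : Pairwise (Function.onFun Disjoint piece) := by
  have key : ∀ m n : ℕ, m < n → Disjoint (piece m) (piece n) := by
    intro m n hmn
    rw [Set.disjoint_left]
    rintro x ⟨hx1, _⟩ ⟨_, hx2⟩
    have : (2:ℝ) ^ (-(n:ℤ)) ≤ (2:ℝ) ^ (-(m:ℤ)-1) := by
      apply zpow_le_zpow_right₀ one_le_two; omega
    linarith
  intro m n hmn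
  rcases hmn.lt_or_gt with h | h
  · exact key m n h
  · exact (key n m h).symm


lemma key_iff {n : ℕ} {x : ℝ} (hx : x ∈ piece n) (m : ℤ) :
    (x < (2:ℝ) ^ m) ↔ ((2:ℝ) ^ (-(n:ℤ)-1) < (2:ℝ) ^ m) := by
  obtain ⟨h1, h2⟩ := hx
  rw [zpow_lt_zpow_iff_right₀ (one_lt_two (α := ℝ))]
  constructor
  · intro h
    by_contra hm
    push_neg at hm
    exact absurd h (not_lt.mpr (le_trans (zpow_le_zpow_right₀ one_le_two hm) h1))
  · intro h
    exact lt_of_lt_of_le h2 (zpow_le_zpow_right₀ one_le_two (by omega))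

lemma rho_const {k n : ℕ} {x : ℝ} (hx : x ∈ piece n) :
    rho k x = rho k ((2:ℝ) ^ (-(n:ℤ)-1)) := by
  have h1 : (x < 1/2) = ((2:ℝ) ^ (-(n:ℤ)-1) < 1/2) := by
    have : ((1:ℝ)/2) = (2:ℝ) ^ (-1:ℤ) := by norm_num
    rw [this]
    exact propext (key_iff hx (-1))
  have h2 : (x < (2:ℝ) ^ (-(k:ℤ))) = ((2:ℝ) ^ (-(n:ℤ)-1) < (2:ℝ) ^ (-(k:ℤ))) :=
    propext (key_iff hx (-(k:ℤ)))
  unfold rho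
  simp only [h1, h2]

lemma f_eq {k n : ℕ} {x : ℝ} (hx : x ∈ piece n) :
    rho k x * Real.logb 2 (Dslope k x) = cval k n := by
  rw [rho_const hx, cval]
  congr 1
  obtain ⟨h1, h2⟩ := hx
  cases n with
  | zero =>
    have hx2 : (1:ℝ)/2 ≤ x := by
      have : ((2:ℝ) ^ (-(0:ℕ):ℤ)-1) = 0 := by norm_num
      calc (1:ℝ)/2 = (2:ℝ) ^ (-((0:ℕ):ℤ)-1) := by norm_num
        _ ≤ x := h1
    rw [Dslope, if_pos hx2, logb_two_zpow]
    simp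
  | succ m =>
    have hxlt : ¬ ((1:ℝ)/2 ≤ x) := by
      push_neg
      calc x < (2:ℝ) ^ (-((m+1:ℕ):ℤ)) := h2
        _ ≤ (2:ℝ) ^ (-1:ℤ) := zpow_le_zpow_right₀ one_le_two (by push_cast; omega)
        _ = 1/2 := by norm_num
    have hx0 : 0 < x := lt_of_lt_of_le (zpow_pos two_pos _) h1
    have hlog : Int.log 2 x = -((m+1:ℕ):ℤ) - 1 := by
      have hle : -((m+1:ℕ):ℤ) - 1 ≤ Int.log 2 x :=
        (Int.zpow_le_iff_le_log one_lt_two hx0).mp h1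
      have hlt : Int.log 2 x < -((m+1:ℕ):ℤ) :=
        (Int.lt_zpow_iff_log_lt one_lt_two hx0).mp h2
      omega
    rw [Dslope, if_neg hxlt, hlog, logb_two_zpow]
    push_cast
    ring

lemma zpow_eq_half_pow (n : ℕ) : (2:ℝ) ^ (-(n:ℤ)-1) = (1/2:ℝ) ^ (n+1) := by
  rw [show (-(n:ℤ)-1) = -((n+1:ℕ):ℤ) by push_cast; ring, zpow_neg, zpow_natCast]
  rw [one_div, inv_pow]

lemma volume_piece (n : ℕ) : volume (piece n) = ENNReal.ofReal ((1/2:ℝ)^(n+1)) := by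
  rw [piece, Real.volume_Ico]
  congr 1
  have : (2:ℝ) ^ (-(n:ℤ)) = (2:ℝ) ^ (-(n:ℤ)-1) * 2 := by
    rw [← zpow_add_one₀ (two_ne_zero)]; ring_nf
  rw [this, zpow_eq_half_pow]
  ring

lemma integral_piece_const (n : ℕ) {g : ℝ → ℝ} {c : ℝ}
    (h : ∀ x ∈ piece n, g x = c) :
    ∫ x in piece n, g x = c * (1/2:ℝ)^(n+1) := by
  have hm : MeasurableSet (piece n) := measurableSet_Ico
  rw [setIntegral_congr_fun hm h, setIntegral_const, measureReal_def, volume_piece,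
    ENNReal.toReal_ofReal (by positivity), smul_eq_mul, mul_comm]

lemma integrableOn_piece (k n : ℕ) :
    IntegrableOn (fun x => rho k x * Real.logb 2 (Dslope k x)) (piece n) volume := by
  have : IntegrableOn (fun _ : ℝ => cval k n) (piece n) volume := by
    apply (integrableOn_const_iff).mpr
    right
    rw [volume_piece]
    exact ENNReal.ofReal_lt_top
  exact this.congr_fun (fun x hx => (f_eq hx).symm) measurableSet_Ico

lemma cval_bound (k n : ℕ) :
    |cval k n| ≤ ((2:ℝ)^k + 2) * ((k:ℝ)+1) * ((n:ℝ)+1) := by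
  have h2k : (1:ℝ) ≤ (2:ℝ)^k := one_le_pow₀ one_le_two
  have hrho : |rho k ((2:ℝ) ^ (-(n:ℤ)-1))| ≤ (2:ℝ)^k + 2 := by
    unfold rho
    split_ifs <;> rw [abs_of_nonneg (by positivity)] <;> nlinarith
  have hq : |(if n = 0 then 1 - (k:ℝ) else (n:ℝ)+1)| ≤ ((k:ℝ)+1) * ((n:ℝ)+1) := by
    split_ifs with h
    · subst h
      simp only [Nat.cast_zero]
      have hk0 : (0:ℝ) ≤ (k:ℝ) := Nat.cast_nonneg k
      rw [abs_le]
      constructor <;> linarith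
    · rw [abs_of_nonneg (by positivity)]
      nlinarith [Nat.cast_nonneg (α := ℝ) k, Nat.cast_nonneg (α := ℝ) n]
  calc |cval k n| = |rho k ((2:ℝ) ^ (-(n:ℤ)-1))| * |(if n = 0 then 1 - (k:ℝ) else (n:ℝ)+1)| :=
        abs_mul _ _
    _ ≤ ((2:ℝ)^k + 2) * (((k:ℝ)+1) * ((n:ℝ)+1)) := by
        apply mul_le_mul hrho hq (abs_nonneg _) (by positivity)
    _ = ((2:ℝ)^k + 2) * ((k:ℝ)+1) * ((n:ℝ)+1) := by ring

lemma summable_shift : Summable (fun n : ℕ => ((n:ℝ)+1) * (1/2:ℝ)^(n+1)) := by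
  have hb : Summable (fun n : ℕ => (n:ℝ) * (1/2:ℝ)^n) := by
    have := summable_pow_mul_geometric_of_norm_lt_one (R := ℝ) 1
      (r := 1/2) (by rw [Real.norm_eq_abs, abs_of_nonneg (by norm_num : (0:ℝ) ≤ 1/2)]; norm_num)
    simpa using this
  have := (summable_nat_add_iff 1).mpr hb
  apply this.congr
  intro n
  push_cast
  ring

lemma summable_cval (k : ℕ) : Summable (fun n : ℕ => cval k n * (1/2:ℝ)^(n+1)) := by
  refine Summable.of_norm_bounded
    (summable_shift.mul_left (((2:ℝ)^k + 2) * ((k:ℝ)+1))) ?_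
  intro n
  rw [Real.norm_eq_abs, abs_mul, abs_of_nonneg (by positivity : (0:ℝ) ≤ (1/2:ℝ)^(n+1))]
  have := cval_bound k n
  nlinarith [abs_nonneg (cval k n), pow_pos (by norm_num : (0:ℝ) < 1/2) (n+1)]


lemma summable_base : Summable (fun n : ℕ => (n:ℝ) * (1/2:ℝ)^n) := by
  have := summable_pow_mul_geometric_of_norm_lt_one (R := ℝ) 1
    (r := 1/2) (by rw [Real.norm_eq_abs, abs_of_nonneg (by norm_num : (0:ℝ) ≤ 1/2)]; norm_num)
  simpa using this

lemma tsum_base : ∑' n : ℕ, (n:ℝ) * (1/2:ℝ)^n = 2 := by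
  have := tsum_coe_mul_geometric_of_norm_lt_one (𝕜 := ℝ) (r := 1/2)
    (by rw [Real.norm_eq_abs, abs_of_nonneg (by norm_num : (0:ℝ) ≤ 1/2)]; norm_num)
  rw [this]; norm_num

lemma sum_base (j : ℕ) :
    ∑ i ∈ Finset.range (j+1), (i:ℝ) * (1/2:ℝ)^i = 2 - ((j:ℝ)+2) * (1/2:ℝ)^j := by
  induction j with
  | zero => norm_num
  | succ m ih =>
    rw [Finset.sum_range_succ, ih]
    push_cast
    ring

lemma tsum_shift (j : ℕ) :
    ∑' n : ℕ, ((n:ℝ)+(j:ℝ)+1) * (1/2:ℝ)^(n+j+1) = ((j:ℝ)+2) * (1/2:ℝ)^j := by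
  have h := Summable.sum_add_tsum_nat_add (f := fun n : ℕ => (n:ℝ) * (1/2:ℝ)^n) (j+1) summable_base
  rw [tsum_base, sum_base] at h
  have h2 : ∑' n : ℕ, ((n:ℝ)+(j:ℝ)+1) * (1/2:ℝ)^(n+j+1)
      = ∑' n : ℕ, ((n+(j+1) : ℕ):ℝ) * (1/2:ℝ)^(n+(j+1)) := by
    apply tsum_congr
    intro n
    push_cast
    ring
  rw [h2]
  linarith

lemma sum_H (m : ℕ) :
    ∑ n ∈ Finset.range m, ((n:ℝ)+2) * (1/2:ℝ)^(n+2) = 3/2 - ((m:ℝ)+3) * (1/2:ℝ)^(m+1) := by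
  induction m with
  | zero => norm_num
  | succ p ih =>
    rw [Finset.sum_range_succ, ih]
    push_cast
    ring

lemma tsum_main (k : ℕ) : ∑' n : ℕ, cval k n * (1/2:ℝ)^(n+1) = 2 := by
  rcases Nat.lt_or_ge k 2 with hk | hk
  · interval_cases k
    · -- k = 0
      rw [← Summable.sum_add_tsum_nat_add (f := fun n => cval 0 n * (1/2:ℝ)^(n+1)) 1 (summable_cval 0)]
      simp only [Finset.sum_range_one]
      have h1 : ∀ n : ℕ, cval 0 (n+1) * (1/2:ℝ)^(n+1+1)
          = ((n:ℝ)+((1:ℕ):ℝ)+1) * (1/2:ℝ)^(n+1+1) := by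
        intro n
        simp only [cval, rho, if_pos rfl, if_neg (Nat.succ_ne_zero n)]
        push_cast
        ring
      rw [tsum_congr h1, tsum_shift 1]
      norm_num [cval, rho]
    · -- k = 1
      rw [← Summable.sum_add_tsum_nat_add (f := fun n => cval 1 n * (1/2:ℝ)^(n+1)) 1 (summable_cval 1)]
      simp only [Finset.sum_range_one]
      have h1 : ∀ n : ℕ, cval 1 (n+1) * (1/2:ℝ)^(n+1+1)
          = (4/3) * (((n:ℝ)+((1:ℕ):ℝ)+1) * (1/2:ℝ)^(n+1+1)) := by
        intro n
        have hlt : (2:ℝ) ^ (-((n+1:ℕ):ℤ)-1) < 1/2 := by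
          rw [show (1:ℝ)/2 = (2:ℝ)^(-1:ℤ) by norm_num,
            zpow_lt_zpow_iff_right₀ (one_lt_two (α := ℝ))]
          push_cast; omega
        simp only [cval, rho, if_neg (Nat.succ_ne_zero n), if_pos rfl, if_pos hlt,
          Nat.one_ne_zero, if_false]
        push_cast
        ring
      rw [tsum_congr h1, tsum_mul_left, tsum_shift 1]
      norm_num [cval]
  · -- k ≥ 2
    obtain ⟨j, rfl⟩ : ∃ j, k = j + 2 := ⟨k - 2, by omega⟩
    rw [← Summable.sum_add_tsum_nat_add (f := fun n => cval (j+2) n * (1/2:ℝ)^(n+1)) (j+2)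
      (summable_cval (j+2))]
    have htail : ∀ n : ℕ, cval (j+2) (n+(j+2)) * (1/2:ℝ)^(n+(j+2)+1)
        = ((2:ℝ)^(j+2) + 2)/3 * (((n:ℝ)+((j+2:ℕ):ℝ)+1) * (1/2:ℝ)^(n+(j+2)+1)) := by
      intro n
      have hne : n + (j+2) ≠ 0 := by omega
      have hlt : (2:ℝ) ^ (-((n+(j+2):ℕ):ℤ)-1) < (2:ℝ)^(-((j+2:ℕ):ℤ)) := by
        rw [zpow_lt_zpow_iff_right₀ (one_lt_two (α := ℝ))]
        push_cast; omega
      simp only [cval, rho, if_neg hne, if_neg (by omega : j+2 ≠ 0), if_neg (by omega : j+2 ≠ 1),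
        if_pos hlt]
      push_cast
      ring
    rw [tsum_congr htail, tsum_mul_left, tsum_shift (j+2)]
    have hzero : cval (j+2) 0 * (1/2:ℝ)^(0+1) = (2/3) * (1 - ((j:ℝ)+2)) * (1/2) := by
      have hnlt : ¬ ((2:ℝ) ^ (-((0:ℕ):ℤ)-1) < (2:ℝ)^(-((j+2:ℕ):ℤ))) := by
        rw [not_lt]
        apply zpow_le_zpow_right₀ one_le_two
        push_cast; omega
      simp only [cval, rho, if_pos rfl, if_neg (by omega : j+2 ≠ 0), if_neg (by omega : j+2 ≠ 1),
        if_neg hnlt]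
      push_cast
      ring
    have hmid : ∀ n ∈ Finset.range (j+1), cval (j+2) (n+1) * (1/2:ℝ)^(n+1+1)
        = (2/3) * (((n:ℝ)+2) * (1/2:ℝ)^(n+2)) := by
      intro n hn
      rw [Finset.mem_range] at hn
      have hnlt : ¬ ((2:ℝ) ^ (-((n+1:ℕ):ℤ)-1) < (2:ℝ)^(-((j+2:ℕ):ℤ))) := by
        rw [not_lt]
        apply zpow_le_zpow_right₀ one_le_two
        push_cast; omega
      simp only [cval, rho, if_neg (Nat.succ_ne_zero n), if_neg (by omega : j+2 ≠ 0),
        if_neg (by omega : j+2 ≠ 1), if_neg hnlt]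
      push_cast
      ring
    have hhead : ∑ n ∈ Finset.range (j+2), cval (j+2) n * (1/2:ℝ)^(n+1)
        = (2/3) * (1 - ((j:ℝ)+2)) * (1/2)
          + (2/3) * (3/2 - (((j+1:ℕ):ℝ)+3) * (1/2:ℝ)^((j+1)+1)) := by
      rw [Finset.sum_range_succ']
      rw [Finset.sum_congr rfl hmid, ← Finset.mul_sum, sum_H (j+1), hzero]
      ring
    rw [hhead]
    have h1 : (2:ℝ)^(j+2) * (1/2:ℝ)^(j+2) = 1 := by
      rw [← mul_pow]; norm_num
    push_cast
    linear_combination (((j:ℝ)+4)/3) * h1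

lemma summable_abs_cval (k : ℕ) : Summable (fun n : ℕ => |cval k n| * (1/2:ℝ)^(n+1)) := by
  refine Summable.of_norm_bounded
    (summable_shift.mul_left (((2:ℝ)^k + 2) * ((k:ℝ)+1))) ?_
  intro n
  rw [Real.norm_eq_abs, abs_mul, abs_abs,
    abs_of_nonneg (by positivity : (0:ℝ) ≤ (1/2:ℝ)^(n+1))]
  have := cval_bound k n
  nlinarith [abs_nonneg (cval k n), pow_pos (by norm_num : (0:ℝ) < 1/2) (n+1)]

lemma integrableOn_union (k : ℕ) :
    IntegrableOn (fun x => rho k x * Real.logb 2 (Dslope k x)) (⋃ n, piece n) volume := by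
  apply integrableOn_iUnion_of_summable_integral_norm
    (fun n => integrableOn_piece k n)
  have heq : ∀ n : ℕ, (∫ x in piece n, ‖rho k x * Real.logb 2 (Dslope k x)‖)
      = |cval k n| * (1/2:ℝ)^(n+1) := by
    intro n
    apply integral_piece_const
    intro x hx
    rw [Real.norm_eq_abs, f_eq hx]
  exact (summable_abs_cval k).congr (fun n => (heq n).symm)

end Stmt3

/-- (Proposition 3) For every `k ≥ 0`, the global Lyapunov exponent of the infinitely
piecewise linear map `φ_k` equals 2: `∫₀¹ ρᵏ(x) log₂(D_k(x)) dx = 2`. -/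
theorem stmt_3 (k : ℕ) :
    ∫ x in Set.Icc (0 : ℝ) 1, rho k x * Real.logb 2 (Dslope k x) = 2 := by
  rw [← setIntegral_congr_set MeasureTheory.Ioo_ae_eq_Icc, ← Stmt3.union_piece,
    MeasureTheory.integral_iUnion (s := Stmt3.piece) (fun n => measurableSet_Ico) Stmt3.piece_disjoint
      (Stmt3.integrableOn_union k)]
  have h : ∀ n : ℕ, (∫ x in Stmt3.piece n, rho k x * Real.logb 2 (Dslope k x))
      = Stmt3.cval k n * (1/2:ℝ)^(n+1) :=
    fun n => Stmt3.integral_piece_const n (fun x hx => Stmt3.f_eq hx)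
  rw [tsum_congr h, Stmt3.tsum_main k]
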